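/- Let L be an infinite lattice and n ≥ 1. If L is n-order polynomially complete, then every antichain A ⊆ Lⁿ (in the componentwise order) has cardinality strictly less than #L. -/
import Mathlib


universe u

/-- An `n`-ary polynomial function on a lattice: member of the smallest set of functions
`Lⁿ → L` containing all coordinate projections and all constant functions and closed
under pointwise meet and join. -/
inductive IsLatticePolynomial {L : Type u} [Lattice L] {n : ℕ} : ((Fin n → L) → L) → Prop
  | proj (i : Fin n) : IsLatticePolynomial (fun x => x i)
  | const (c : L) : IsLatticePolynomial (fun _ => c)
  | inf {p q : (Fin n → L) → L} : IsLatticePolynomial p → IsLatticePolynomial q →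
      IsLatticePolynomial (fun x => p x ⊓ q x)
  | sup {p q : (Fin n → L) → L} : IsLatticePolynomial p → IsLatticePolynomial q →
      IsLatticePolynomial (fun x => p x ⊔ q x)

/-- Node labels for lattice polynomial terms. -/
abbrev PolyArity (L : Type u) (n : ℕ) : Type u := (L ⊕ ULift.{u} (Fin n)) ⊕ ULift.{u} Bool

/-- Arities: leaves have no children, sup/inf nodes have two children. -/
def PolyBranch (L : Type u) (n : ℕ) : PolyArity L n → Type u
  | .inl _ => PEmpty
  | .inr _ => ULift Bool

instance polyBranchFinite (L : Type u) (n : ℕ) : ∀ a : PolyArity L n, Finite (PolyBranch L n a) := by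
  rintro (a | a) <;> dsimp [PolyBranch] <;> infer_instance

variable {L : Type u} [Lattice L] {n : ℕ}

/-- Evaluation of a polynomial term. -/
def evalW : WType (PolyBranch L n) → (Fin n → L) → L
  | .mk (.inl (.inl c)) _ => fun _ => c
  | .mk (.inl (.inr i)) _ => fun x => x i.down
  | .mk (.inr b) f => fun x =>
      if b.down then evalW (f ⟨true⟩) x ⊔ evalW (f ⟨false⟩) x
      else evalW (f ⟨true⟩) x ⊓ evalW (f ⟨false⟩) x

theorem evalW_poly (t : WType (PolyBranch L n)) : IsLatticePolynomial (evalW t) := by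
  induction t with
  | mk a f ih =>
    rcases a with (c | i) | b
    · exact IsLatticePolynomial.const c
    · exact IsLatticePolynomial.proj i.down
    · rcases b with ⟨_ | _⟩
      · exact IsLatticePolynomial.inf (ih ⟨true⟩) (ih ⟨false⟩)
      · exact IsLatticePolynomial.sup (ih ⟨true⟩) (ih ⟨false⟩)

theorem exists_evalW {p : (Fin n → L) → L} (hp : IsLatticePolynomial p) :
    ∃ t : WType (PolyBranch L n), evalW t = p := by
  induction hp with
  | proj i => exact ⟨.mk (.inl (.inr ⟨i⟩)) PEmpty.elim, rfl⟩
  | const c => exact ⟨.mk (.inl (.inl c)) PEmpty.elim, rfl⟩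
  | inf hp hq ihp ihq =>
    obtain ⟨t₁, ht₁⟩ := ihp
    obtain ⟨t₂, ht₂⟩ := ihq
    refine ⟨.mk (.inr ⟨false⟩) (fun b => if b.down then t₁ else t₂), ?_⟩
    simp [evalW, ht₁, ht₂]
  | sup hp hq ihp ihq =>
    obtain ⟨t₁, ht₁⟩ := ihp
    obtain ⟨t₂, ht₂⟩ := ihq
    refine ⟨.mk (.inr ⟨true⟩) (fun b => if b.down then t₁ else t₂), ?_⟩
    simp [evalW, ht₁, ht₂]

/-- If an infinite lattice `L` is `n`-order polynomially complete (`n ≥ 1`), then every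
antichain in `Lⁿ` has cardinality strictly less than `#L`. -/
theorem stmt6 {L : Type u} [Lattice L] [Infinite L] (n : ℕ) (hn : 1 ≤ n)
    (hopc : ∀ f : (Fin n → L) → L, Monotone f → IsLatticePolynomial f)
    (A : Set (Fin n → L)) (hA : IsAntichain (· ≤ ·) A) :
    Cardinal.mk A < Cardinal.mk L := by
  classical
  by_contra hcon
  push_neg at hcon
  -- two distinct comparable elements
  obtain ⟨a, b, hab⟩ := exists_pair_ne L
  set u : L := a ⊓ b with hu
  set v : L := a ⊔ b with hv
  have huv : u ≠ v := by
    intro h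
    apply hab
    have h1 : a ≤ b := by
      have hvb : v ≤ b := by rw [← h]; exact inf_le_right
      exact le_trans le_sup_left hvb
    have h2 : b ≤ a := by
      have hva : v ≤ a := by rw [← h]; exact inf_le_left
      exact le_trans le_sup_right hva
    exact le_antisymm h1 h2
  -- the family of monotone functions indexed by subsets of A
  set g : Set A → ((Fin n → L) → L) := fun S x =>
    if ∃ c : A, c ∈ S ∧ (c : Fin n → L) ≤ x then v else u with hg
  have hgmono : ∀ S, Monotone (g S) := by
    intro S x y hxy
    simp only [hg]
    by_cases hx : ∃ c : A, c ∈ S ∧ (c : Fin n → L) ≤ x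
    · obtain ⟨c, hc, hcx⟩ := hx
      rw [if_pos ⟨c, hc, hcx⟩, if_pos ⟨c, hc, hcx.trans hxy⟩]
    · rw [if_neg hx]
      by_cases hy : ∃ c : A, c ∈ S ∧ (c : Fin n → L) ≤ y
      · rw [if_pos hy]; exact inf_le_sup
      · rw [if_neg hy]
  have hginj : Function.Injective g := by
    intro S T hST
    ext c
    constructor
    · intro hcS
      have h1 : g S (c : Fin n → L) = v := by
        simp only [hg]
        exact if_pos ⟨c, hcS, le_refl _⟩
      have h2 : g T (c : Fin n → L) = v := by rw [← hST]; exact h1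
      simp only [hg] at h2
      by_cases h : ∃ d : A, d ∈ T ∧ (d : Fin n → L) ≤ (c : Fin n → L)
      · obtain ⟨d, hdT, hdc⟩ := h
        have : (d : Fin n → L) = (c : Fin n → L) := by
          by_contra hne
          exact hA d.2 c.2 hne hdc
        have : d = c := Subtype.ext this
        exact this ▸ hdT
      · rw [if_neg h] at h2
        exact absurd h2 huv
    · intro hcT
      have h1 : g T (c : Fin n → L) = v := by
        simp only [hg]
        exact if_pos ⟨c, hcT, le_refl _⟩
      have h2 : g S (c : Fin n → L) = v := by rw [hST]; exact h1
      simp only [hg] at h2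
      by_cases h : ∃ d : A, d ∈ S ∧ (d : Fin n → L) ≤ (c : Fin n → L)
      · obtain ⟨d, hdS, hdc⟩ := h
        have : (d : Fin n → L) = (c : Fin n → L) := by
          by_contra hne
          exact hA d.2 c.2 hne hdc
        have : d = c := Subtype.ext this
        exact this ▸ hdS
      · rw [if_neg h] at h2
        exact absurd h2 huv
  -- injection of Set A into polynomials
  have hinj2 : Function.Injective
      (fun S : Set A => (⟨g S, hopc _ (hgmono S)⟩ : {f : (Fin n → L) → L // IsLatticePolynomial f})) := by
    intro S T h
    exact hginj (congrArg Subtype.val h)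
  have h1 : Cardinal.mk (Set A) ≤ Cardinal.mk {f : (Fin n → L) → L // IsLatticePolynomial f} :=
    Cardinal.mk_le_of_injective hinj2
  -- surjection from terms onto polynomials
  have h2 : Cardinal.mk {f : (Fin n → L) → L // IsLatticePolynomial f}
      ≤ Cardinal.mk (WType (PolyBranch L n)) := by
    apply Cardinal.mk_le_of_surjective
      (f := fun t : WType (PolyBranch L n) =>
        (⟨evalW t, evalW_poly t⟩ : {f : (Fin n → L) → L // IsLatticePolynomial f}))
    rintro ⟨p, hp⟩
    obtain ⟨t, ht⟩ := exists_evalW hp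
    exact ⟨t, Subtype.ext ht⟩
  -- count the terms
  have h3 : Cardinal.mk (WType (PolyBranch L n)) ≤ max (Cardinal.mk (PolyArity L n)) Cardinal.aleph0 :=
    WType.cardinalMk_le_max_aleph0_of_finite
  have hαL : Cardinal.mk (PolyArity L n) ≤ Cardinal.mk L := by
    have : Cardinal.mk (PolyArity L n) = Cardinal.mk L + (n : Cardinal) + 2 := by
      simp [PolyArity, Cardinal.mk_sum]
    rw [this]
    have hℵ : Cardinal.aleph0 ≤ Cardinal.mk L := Cardinal.aleph0_le_mk L
    calc Cardinal.mk L + (n : Cardinal) + 2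
        ≤ Cardinal.mk L + Cardinal.aleph0 + Cardinal.aleph0 := by
          gcongr
          · exact (Cardinal.nat_lt_aleph0 n).le
          · exact (Cardinal.nat_lt_aleph0 2).le
      _ = Cardinal.mk L := by
          rw [Cardinal.add_eq_left hℵ hℵ, Cardinal.add_eq_left hℵ hℵ]
  have h4 : max (Cardinal.mk (PolyArity L n)) Cardinal.aleph0 ≤ Cardinal.mk L :=
    max_le hαL (Cardinal.aleph0_le_mk L)
  have hfinal : Cardinal.mk (Set A) ≤ Cardinal.mk A :=
    le_trans h1 (le_trans h2 (le_trans h3 (le_trans h4 hcon)))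
  rw [Cardinal.mk_set] at hfinal
  exact absurd hfinal (not_le.mpr (Cardinal.cantor _))
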